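/- Let δ ∈ (0,1]. Suppose w : [0,1] → ℝ is twice continuously differentiable with w(0) = 0 and w'(0) = 0, and T : [0,1] → ℝ is continuously differentiable with T(0) = 0. Then ∫₀^δ |w(z) T(z)| dz ≤ (1/7) δ^{7/2} · (sup_{z∈[0,1]} |w''(z)|) · (∫₀¹ T'(z)² dz)^{1/2}. -/

import Mathlib

open MeasureTheory

private lemma cs_aux (g : ℝ → ℝ) (hg : Continuous g) {z : ℝ} (hz : 0 ≤ z) :
    (∫ x in (0:ℝ)..z, |g x|) ≤
      z ^ ((1:ℝ)/2) * (∫ x in (0:ℝ)..z, (g x) ^ 2) ^ ((1:ℝ)/2) := by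
  set μ := volume.restrict (Set.Ioc (0:ℝ) z) with hμ
  haveI : IsFiniteMeasure μ := ⟨by
    rw [hμ, Measure.restrict_apply_univ]; exact measure_Ioc_lt_top⟩
  obtain ⟨C, hC⟩ := (isCompact_Icc (a := (0:ℝ)) (b := z)).exists_bound_of_continuousOn
    hg.continuousOn
  have hgm : MemLp (fun x => |g x|) (ENNReal.ofReal 2) μ := by
    refine MemLp.of_bound (hg.abs.aestronglyMeasurable.restrict) C ?_
    refine (ae_restrict_iff' measurableSet_Ioc).2 (ae_of_all _ fun x hx => ?_)
    simpa [abs_abs] using hC x (Set.Ioc_subset_Icc_self hx)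
  have h1m : MemLp (fun _ : ℝ => (1:ℝ)) (ENNReal.ofReal 2) μ := memLp_const 1
  have hpq : Real.HolderConjugate 2 2 := ⟨by norm_num, by norm_num, by norm_num⟩
  have H := integral_mul_le_Lp_mul_Lq_of_nonneg (μ := μ) hpq
    (ae_of_all _ fun _ => zero_le_one) (ae_of_all _ fun x => abs_nonneg (g x)) h1m hgm
  simp only [one_mul, Real.one_rpow] at H
  have h1 : (∫ _ : ℝ, (1:ℝ) ∂μ) = z := by
    simp [hμ, Real.volume_Ioc, ENNReal.toReal_ofReal hz, hz]
  have h2 : (∫ x, |g x| ^ (2:ℝ) ∂μ) = ∫ x, (g x) ^ 2 ∂μ := by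
    refine integral_congr_ae (ae_of_all _ fun x => ?_)
    show |g x| ^ (2:ℝ) = g x ^ 2
    rw [show (2:ℝ) = ((2:ℕ):ℝ) by norm_num, Real.rpow_natCast, sq_abs]
  rw [h1, h2] at H
  rw [intervalIntegral.integral_of_le hz, intervalIntegral.integral_of_le hz]
  exact H

/-- Lower boundary-layer estimate in the no-slip proof: for `δ ∈ (0,1]`, if `w` is C²
with `w 0 = 0` and `w' 0 = 0`, and `T` is C¹ with `T 0 = 0`, then
`∫₀^δ |w T| ≤ (1/7) δ^{7/2} (sup_{[0,1]} |w''|) ‖T'‖₂`. -/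
theorem lower_boundary_layer_estimate_no_slip
    (δ : ℝ) (hδ : δ ∈ Set.Ioc (0:ℝ) 1)
    (w T : ℝ → ℝ) (hw : ContDiff ℝ 2 w) (hT : ContDiff ℝ 1 T)
    (hw0 : w 0 = 0) (hw'0 : deriv w 0 = 0) (hT0 : T 0 = 0) :
    (∫ z in (0:ℝ)..δ, |w z * T z|) ≤
      (1/7) * δ ^ ((7:ℝ)/2) * (⨆ z : Set.Icc (0:ℝ) 1, |iteratedDeriv 2 w z.1|) *
        (∫ z in (0:ℝ)..1, (deriv T z)^2) ^ ((1:ℝ)/2) := by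
  obtain ⟨hδ0, hδ1⟩ := hδ
  have hδ0' : (0:ℝ) ≤ δ := hδ0.le
  have hw1 : ContDiff ℝ 1 (deriv w) := by
    have h2 : ContDiff ℝ (1+1) w := by norm_num at hw ⊢; exact hw
    exact (contDiff_succ_iff_deriv.mp h2).2.2
  have hwdiff : Differentiable ℝ w := hw.differentiable (by norm_num)
  have hw'diff : Differentiable ℝ (deriv w) := hw1.differentiable (by norm_num)
  have hw''cont : Continuous (deriv (deriv w)) := (contDiff_one_iff_deriv.mp hw1).2
  have hTdiff : Differentiable ℝ T := hT.differentiable (by norm_num)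
  have hT'cont : Continuous (deriv T) := (contDiff_one_iff_deriv.mp hT).2
  have hiter : iteratedDeriv 2 w = deriv (deriv w) := by
    rw [show (2:ℕ) = 1 + 1 from rfl, iteratedDeriv_succ, iteratedDeriv_one]
  set M := ⨆ z : Set.Icc (0:ℝ) 1, |iteratedDeriv 2 w z.1| with hMdef
  set N := (∫ z in (0:ℝ)..1, (deriv T z)^2) ^ ((1:ℝ)/2) with hNdef
  have hbdd : BddAbove (Set.range fun z : Set.Icc (0:ℝ) 1 => |iteratedDeriv 2 w z.1|) := by
    obtain ⟨C, hC⟩ := (isCompact_Icc (a := (0:ℝ)) (b := 1)).exists_bound_of_continuousOn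
      (hw.continuous_iteratedDeriv 2 (by norm_num)).continuousOn
    exact ⟨C, by rintro _ ⟨t, rfl⟩; simpa using hC t t.2⟩
  have hMle : ∀ t ∈ Set.Icc (0:ℝ) 1, |deriv (deriv w) t| ≤ M := fun t ht => by
    have h := le_ciSup hbdd (⟨t, ht⟩ : Set.Icc (0:ℝ) 1)
    rw [← hMdef] at h
    simpa [hiter] using h
  have hM0 : 0 ≤ M := by
    have h := le_ciSup hbdd (⟨0, by norm_num⟩ : Set.Icc (0:ℝ) 1)
    rw [← hMdef] at h
    exact le_trans (abs_nonneg _) h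
  have hN0 : 0 ≤ N :=
    Real.rpow_nonneg
      (intervalIntegral.integral_nonneg (by norm_num) fun x _ => sq_nonneg _) _
  -- deriv w bound
  have hdw : ∀ t ∈ Set.Icc (0:ℝ) 1, |deriv w t| ≤ M * t := by
    intro t ht
    have hftc : (∫ x in (0:ℝ)..t, deriv (deriv w) x) = deriv w t - deriv w 0 :=
      intervalIntegral.integral_deriv_eq_sub (fun x _ => hw'diff x)
        (hw''cont.intervalIntegrable _ _)
    have hb : ‖∫ x in (0:ℝ)..t, deriv (deriv w) x‖ ≤ M * |t - 0| := by
      apply intervalIntegral.norm_integral_le_of_norm_le_const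
      intro x hx
      rw [Set.uIoc_of_le ht.1] at hx
      simpa using hMle x ⟨hx.1.le, hx.2.trans ht.2⟩
    rw [hftc, hw'0, sub_zero] at hb
    calc |deriv w t| ≤ M * |t - 0| := hb
      _ = M * t := by rw [sub_zero, abs_of_nonneg ht.1]
  -- w bound
  have hwb : ∀ z ∈ Set.Icc (0:ℝ) δ, |w z| ≤ M / 2 * z ^ 2 := by
    intro z hz
    have hz1 : z ≤ 1 := hz.2.trans hδ1
    have hftc : (∫ x in (0:ℝ)..z, deriv w x) = w z - w 0 :=
      intervalIntegral.integral_deriv_eq_sub (fun x _ => hwdiff x)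
        (hw1.continuous.intervalIntegrable _ _)
    have h1 : |∫ x in (0:ℝ)..z, deriv w x| ≤ ∫ x in (0:ℝ)..z, |deriv w x| :=
      intervalIntegral.abs_integral_le_integral_abs hz.1
    have h2 : (∫ x in (0:ℝ)..z, |deriv w x|) ≤ ∫ x in (0:ℝ)..z, M * x := by
      apply intervalIntegral.integral_mono_on hz.1
      · exact (hw1.continuous.abs).intervalIntegrable _ _
      · exact (continuous_const.mul continuous_id).intervalIntegrable _ _
      · intro x hx; exact hdw x ⟨hx.1, hx.2.trans hz1⟩
    have h3 : (∫ x in (0:ℝ)..z, M * x) = M / 2 * z ^ 2 := by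
      rw [intervalIntegral.integral_const_mul, integral_id]; ring
    rw [hftc, hw0, sub_zero] at h1
    linarith
  -- T bound
  have hTb : ∀ z ∈ Set.Icc (0:ℝ) δ, |T z| ≤ z ^ ((1:ℝ)/2) * N := by
    intro z hz
    have hz1 : z ≤ 1 := hz.2.trans hδ1
    have hftc : (∫ x in (0:ℝ)..z, deriv T x) = T z - T 0 :=
      intervalIntegral.integral_deriv_eq_sub (fun x _ => hTdiff x)
        (hT'cont.intervalIntegrable _ _)
    have h1 : |∫ x in (0:ℝ)..z, deriv T x| ≤ ∫ x in (0:ℝ)..z, |deriv T x| :=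
      intervalIntegral.abs_integral_le_integral_abs hz.1
    have h2 := cs_aux (deriv T) hT'cont hz.1
    have h3 : (∫ x in (0:ℝ)..z, (deriv T x) ^ 2) ≤ ∫ x in (0:ℝ)..1, (deriv T x) ^ 2 := by
      apply intervalIntegral.integral_mono_interval le_rfl hz.1 hz1
      · exact ae_of_all _ fun x => sq_nonneg _
      · exact ((hT'cont.pow 2)).intervalIntegrable _ _
    have h4 : (∫ x in (0:ℝ)..z, (deriv T x) ^ 2) ^ ((1:ℝ)/2) ≤ N := by
      rw [hNdef]
      exact Real.rpow_le_rpow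
        (intervalIntegral.integral_nonneg hz.1 fun x _ => sq_nonneg _) h3 (by norm_num)
    rw [hftc, hT0, sub_zero] at h1
    calc |T z| ≤ ∫ x in (0:ℝ)..z, |deriv T x| := h1
      _ ≤ z ^ ((1:ℝ)/2) * (∫ x in (0:ℝ)..z, (deriv T x) ^ 2) ^ ((1:ℝ)/2) := h2
      _ ≤ z ^ ((1:ℝ)/2) * N :=
          mul_le_mul_of_nonneg_left h4 (Real.rpow_nonneg hz.1 _)
  -- combine
  have key : ∀ z ∈ Set.Icc (0:ℝ) δ,
      |w z * T z| ≤ M * N / 2 * (z ^ 2 * z ^ ((1:ℝ)/2)) := by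
    intro z hz
    rw [abs_mul]
    have h := mul_le_mul (hwb z hz) (hTb z hz) (abs_nonneg _) (by positivity)
    calc |w z| * |T z| ≤ M / 2 * z ^ 2 * (z ^ ((1:ℝ)/2) * N) := h
      _ = M * N / 2 * (z ^ 2 * z ^ ((1:ℝ)/2)) := by ring
  have hcont_r : Continuous fun z : ℝ => z ^ ((1:ℝ)/2) :=
    continuous_iff_continuousAt.2 fun x =>
      Real.continuousAt_rpow_const x _ (Or.inr (by norm_num))
  have hint1 : IntervalIntegrable (fun z => |w z * T z|) volume 0 δ :=
    ((hw.continuous.mul hT.continuous).abs).intervalIntegrable _ _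
  have hint2 : IntervalIntegrable
      (fun z => M * N / 2 * (z ^ 2 * z ^ ((1:ℝ)/2))) volume 0 δ :=
    (continuous_const.mul ((continuous_pow 2).mul hcont_r)).intervalIntegrable _ _
  have step := intervalIntegral.integral_mono_on hδ0' hint1 hint2 key
  have hre : Set.EqOn (fun z : ℝ => M * N / 2 * (z ^ 2 * z ^ ((1:ℝ)/2)))
      (fun z : ℝ => M * N / 2 * z ^ ((5:ℝ)/2)) (Set.uIcc (0:ℝ) δ) := by
    intro z hz
    rw [Set.uIcc_of_le hδ0'] at hz
    have hz0 : (0:ℝ) ≤ z := hz.1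
    simp only
    congr 1
    rw [← Real.rpow_natCast z 2, ← Real.rpow_add' hz0 (by norm_num)]
    norm_num
  have hval : (∫ z in (0:ℝ)..δ, M * N / 2 * (z ^ 2 * z ^ ((1:ℝ)/2)))
      = 1/7 * δ ^ ((7:ℝ)/2) * M * N := by
    rw [intervalIntegral.integral_congr hre, intervalIntegral.integral_const_mul,
      integral_rpow (Or.inl (by norm_num))]
    rw [Real.zero_rpow (by norm_num), show (5:ℝ)/2 + 1 = 7/2 by norm_num]
    ring
  calc (∫ z in (0:ℝ)..δ, |w z * T z|)
      ≤ ∫ z in (0:ℝ)..δ, M * N / 2 * (z ^ 2 * z ^ ((1:ℝ)/2)) := step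
    _ = 1/7 * δ ^ ((7:ℝ)/2) * M * N := hval
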